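/- None of the three identities (L) xyzxty ≈ yxzxty, (M) xzxytx ≈ xzyxtx, (R) xzytxy ≈ xzytyx is a consequence of the other two: there exists a finite monoid satisfying (L) and (M) but not (R), a finite monoid satisfying (R) and (M) but not (L), and a finite monoid (of order 5) satisfying (L) and (R) but not (M). Hence the basis {(L), (M), (R)} of the variety generated by the hypoplactic monoid is minimal, in the sense that no proper subset of it is a basis. -/

import Mathlib

open FreeMonoid

/-- The alphabet `A = {1 < 2 < 3 < ...}` of positive integers. -/
abbrev Alph : Type := ℕ+

/-- The finite alphabet `A_n = {1 < ... < n}`. -/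
abbrev AlphN (n : ℕ) : Type := {a : ℕ+ // (a : ℕ) ≤ n}

/-- The defining relations of the hypoplactic monoid. -/
def HypoRel (u v : FreeMonoid Alph) : Prop :=
  (∃ a b c : Alph, a ≤ b ∧ b < c ∧
      u = of a * of c * of b ∧ v = of c * of a * of b) ∨
  (∃ a b c : Alph, a < b ∧ b ≤ c ∧
      u = of b * of a * of c ∧ v = of b * of c * of a) ∨
  (∃ a b c d : Alph, a ≤ b ∧ b < c ∧ c ≤ d ∧
      u = of c * of a * of d * of b ∧ v = of a * of c * of b * of d) ∨
  (∃ a b c d : Alph, a < b ∧ b ≤ c ∧ c < d ∧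
      u = of b * of d * of a * of c ∧ v = of d * of b * of c * of a)

/-- The hypoplactic congruence on `A*`: the congruence generated by `HypoRel`. -/
def hypoCon : Con (FreeMonoid Alph) := conGen HypoRel

/-- The infinite-rank hypoplactic monoid `hypo`. -/
abbrev Hypo : Type := hypoCon.Quotient

/-- The inclusion of `A_n*` into `A*`. -/
def inclN (n : ℕ) : FreeMonoid (AlphN n) →* FreeMonoid Alph :=
  FreeMonoid.map Subtype.val

/-- The hypoplactic congruence restricted to `A_n*`. -/
def hypoConN (n : ℕ) : Con (FreeMonoid (AlphN n)) :=
  hypoCon.comap (inclN n) (fun x y => map_mul (inclN n) x y)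

/-- The rank-`n` hypoplactic monoid `hypo_n`. -/
abbrev HypoN (n : ℕ) : Type := (hypoConN n).Quotient

/-- The letter `1` of `A_2`. -/
def a1 : AlphN 2 := ⟨1, by norm_num⟩

/-- The letter `2` of `A_2`. -/
def a2 : AlphN 2 := ⟨2, by norm_num⟩

/-- The homomorphism `φ_{ij} : A* → hypo_2`, sending `i ↦ [1]`, `j ↦ [2]`,
`a ↦ [21]` for `i < a < j`, and every other letter to the identity. -/
def phi (i j : Alph) : FreeMonoid Alph →* HypoN 2 :=
  FreeMonoid.lift fun a =>
    if a = i then (hypoConN 2).mk' (of a1)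
    else if a = j then (hypoConN 2).mk' (of a2)
    else if i < a ∧ a < j then (hypoConN 2).mk' (of a2 * of a1)
    else 1

/-- A monoid `M` satisfies the identity `u ≈ v` (over the alphabet of variables `X`)
if every homomorphic evaluation of the two words in `M` gives equal values. -/
def MSatisfies (M : Type*) [Monoid M] {X : Type*} (u v : FreeMonoid X) : Prop :=
  ∀ ψ : FreeMonoid X →* M, ψ u = ψ v

/-- An identity `u ≈ v` is balanced if every variable occurs the same number of
times in `u` as in `v`. -/
def IsBalanced {X : Type*} [DecidableEq X] (u v : FreeMonoid X) : Prop :=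
  ∀ x : X, u.toList.count x = v.toList.count x

/-- The left side of identity (L): `xyzxty` (variables `x = 0`, `y = 1`, `z = 2`, `t = 3`). -/
def wL1 : FreeMonoid (Fin 4) := of 0 * of 1 * of 2 * of 0 * of 3 * of 1
/-- The right side of identity (L): `yxzxty`. -/
def wL2 : FreeMonoid (Fin 4) := of 1 * of 0 * of 2 * of 0 * of 3 * of 1
/-- The left side of identity (M): `xzxytx`. -/
def wM1 : FreeMonoid (Fin 4) := of 0 * of 2 * of 0 * of 1 * of 3 * of 0
/-- The right side of identity (M): `xzyxtx`. -/
def wM2 : FreeMonoid (Fin 4) := of 0 * of 2 * of 1 * of 0 * of 3 * of 0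
/-- The left side of identity (R): `xzytxy`. -/
def wR1 : FreeMonoid (Fin 4) := of 0 * of 2 * of 1 * of 3 * of 0 * of 1
/-- The right side of identity (R): `xzytyx`. -/
def wR2 : FreeMonoid (Fin 4) := of 0 * of 2 * of 1 * of 3 * of 1 * of 0

inductive MA where
  | e0
  | e1
  | e2
deriving DecidableEq

instance : Fintype MA := ⟨{.e0, .e1, .e2}, fun x => by cases x <;> decide⟩

def MA.mul : MA → MA → MA
  | .e0, .e0 => .e0
  | .e0, .e1 => .e1
  | .e0, .e2 => .e2
  | .e1, .e0 => .e1
  | .e1, .e1 => .e1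
  | .e1, .e2 => .e2
  | .e2, .e0 => .e2
  | .e2, .e1 => .e1
  | .e2, .e2 => .e2

instance : Monoid MA where
  mul := MA.mul
  one := .e0
  mul_assoc := by decide
  one_mul := by decide
  mul_one := by decide

inductive MB where
  | e0
  | e1
  | e2
deriving DecidableEq

instance : Fintype MB := ⟨{.e0, .e1, .e2}, fun x => by cases x <;> decide⟩

def MB.mul : MB → MB → MB
  | .e0, .e0 => .e0
  | .e0, .e1 => .e1
  | .e0, .e2 => .e2
  | .e1, .e0 => .e1
  | .e1, .e1 => .e1
  | .e1, .e2 => .e1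
  | .e2, .e0 => .e2
  | .e2, .e1 => .e2
  | .e2, .e2 => .e2

instance : Monoid MB where
  mul := MB.mul
  one := .e0
  mul_assoc := by decide
  one_mul := by decide
  mul_one := by decide

inductive MC where
  | e0
  | e1
  | e2
  | e3
  | e4
deriving DecidableEq

instance : Fintype MC := ⟨{.e0, .e1, .e2, .e3, .e4}, fun x => by cases x <;> decide⟩

def MC.mul : MC → MC → MC
  | .e0, .e0 => .e0
  | .e0, .e1 => .e1
  | .e0, .e2 => .e2
  | .e0, .e3 => .e3
  | .e0, .e4 => .e4
  | .e1, .e0 => .e1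
  | .e1, .e1 => .e1
  | .e1, .e2 => .e1
  | .e1, .e3 => .e1
  | .e1, .e4 => .e1
  | .e2, .e0 => .e2
  | .e2, .e1 => .e1
  | .e2, .e2 => .e1
  | .e2, .e3 => .e1
  | .e2, .e4 => .e3
  | .e3, .e0 => .e3
  | .e3, .e1 => .e1
  | .e3, .e2 => .e1
  | .e3, .e3 => .e1
  | .e3, .e4 => .e2
  | .e4, .e0 => .e4
  | .e4, .e1 => .e1
  | .e4, .e2 => .e2
  | .e4, .e3 => .e3
  | .e4, .e4 => .e0

instance : Monoid MC where
  mul := MC.mul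
  one := .e0
  mul_assoc := by decide
  one_mul := by decide
  mul_one := by decide


def fA : Fin 4 → MA
  | 0 => .e1 | 1 => .e2 | 2 => .e0 | 3 => .e0

def fB : Fin 4 → MB
  | 0 => .e1 | 1 => .e2 | 2 => .e0 | 3 => .e0

def fC : Fin 4 → MC
  | 0 => .e4 | 1 => .e2 | 2 => .e0 | 3 => .e0

lemma keyA_L : ∀ x y z t : MA, x*(y*(z*(x*(t*y)))) = y*(x*(z*(x*(t*y)))) := by decide
lemma keyA_M : ∀ x y z t : MA, x*(z*(x*(y*(t*x)))) = x*(z*(y*(x*(t*x)))) := by decide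
lemma keyB_R : ∀ x y z t : MB, x*(z*(y*(t*(x*y)))) = x*(z*(y*(t*(y*x)))) := by decide
lemma keyB_M : ∀ x y z t : MB, x*(z*(x*(y*(t*x)))) = x*(z*(y*(x*(t*x)))) := by decide
lemma keyC_L : ∀ x y z t : MC, x*(y*(z*(x*(t*y)))) = y*(x*(z*(x*(t*y)))) := by decide
lemma keyC_R : ∀ x y z t : MC, x*(z*(y*(t*(x*y)))) = x*(z*(y*(t*(y*x)))) := by decide

/-- None of the identities (L) `xyzxty ≈ yxzxty`, (M) `xzxytx ≈ xzyxtx`,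
(R) `xzytxy ≈ xzytyx` is a consequence of the other two: there is a finite monoid
satisfying (L) and (M) but not (R); a finite monoid satisfying (R) and (M) but not
(L); and a monoid of order `5` satisfying (L) and (R) but not (M). Hence the basis
`{(L), (M), (R)}` of the variety generated by the hypoplactic monoid is minimal. -/
theorem basis_LMR_minimal :
    (∃ (M : Type) (instM : Monoid M), Finite M ∧
        @MSatisfies M instM _ wL1 wL2 ∧ @MSatisfies M instM _ wM1 wM2 ∧
        ¬ @MSatisfies M instM _ wR1 wR2) ∧
    (∃ (M : Type) (instM : Monoid M), Finite M ∧
        @MSatisfies M instM _ wR1 wR2 ∧ @MSatisfies M instM _ wM1 wM2 ∧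
        ¬ @MSatisfies M instM _ wL1 wL2) ∧
    (∃ (M : Type) (instM : Monoid M), Nat.card M = 5 ∧
        @MSatisfies M instM _ wL1 wL2 ∧ @MSatisfies M instM _ wR1 wR2 ∧
        ¬ @MSatisfies M instM _ wM1 wM2) := by
  refine ⟨⟨MA, inferInstance, Finite.of_fintype MA, ?_, ?_, ?_⟩,
    ⟨MB, inferInstance, Finite.of_fintype MB, ?_, ?_, ?_⟩,
    ⟨MC, inferInstance, ?_, ?_, ?_, ?_⟩⟩
  · intro ψ
    simp only [wL1, wL2, map_mul, mul_assoc]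
    exact keyA_L _ _ _ _
  · intro ψ
    simp only [wM1, wM2, map_mul, mul_assoc]
    exact keyA_M _ _ _ _
  · intro h
    have := h (FreeMonoid.lift fA)
    simp only [wR1, wR2, map_mul, FreeMonoid.lift_eval_of] at this
    exact absurd this (by decide)
  · intro ψ
    simp only [wR1, wR2, map_mul, mul_assoc]
    exact keyB_R _ _ _ _
  · intro ψ
    simp only [wM1, wM2, map_mul, mul_assoc]
    exact keyB_M _ _ _ _
  · intro h
    have := h (FreeMonoid.lift fB)
    simp only [wL1, wL2, map_mul, FreeMonoid.lift_eval_of] at this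
    exact absurd this (by decide)
  · rw [Nat.card_eq_fintype_card]; decide
  · intro ψ
    simp only [wL1, wL2, map_mul, mul_assoc]
    exact keyC_L _ _ _ _
  · intro ψ
    simp only [wR1, wR2, map_mul, mul_assoc]
    exact keyC_R _ _ _ _
  · intro h
    have := h (FreeMonoid.lift fC)
    simp only [wM1, wM2, map_mul, FreeMonoid.lift_eval_of] at this
    exact absurd this (by decide)
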